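/- Let n_1 ≥ 2 and let G be a tree in the hypergraph sense (a connected n_1-uniform hypergraph with (n_1-1)·|E(G)|+1 vertices) with at least 2 edges. Then l(G) ≥ μ(G) + 2, i.e., the number of leaves of G is at least 2 plus Σ_{v : deg(v) > 2} (deg(v) - 2). -/

import Mathlib

/-- The incidence (bipartite) graph of a hypergraph given by its incidence relation
`I : V → E → Prop`: a vertex `v` and an edge `e` are adjacent iff they are incident. -/
def incidenceGraph {V E : Type*} (I : V → E → Prop) : SimpleGraph (V ⊕ E) :=
  SimpleGraph.fromRel (fun a b => ∃ v e, a = Sum.inl v ∧ b = Sum.inr e ∧ I v e)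

/-- The degree of a vertex of a hypergraph: the number of edges incident to it. -/
noncomputable def hypDegree {V E : Type*} (I : V → E → Prop) (v : V) : ℕ :=
  {e | I v e}.ncard

/-- `μ(G) = Σ_{v : deg(v) > 2} (deg(v) - 2)` (truncated subtraction makes the
restriction to `deg(v) > 2` automatic). -/
noncomputable def hypMu {V E : Type*} (I : V → E → Prop) : ℕ :=
  ∑ᶠ v : V, (hypDegree I v - 2)

lemma walk_closed {α : Type*} {G : SimpleGraph α} (P : α → Prop)
    (hP : ∀ a b, P a → G.Adj a b → P b) {u w : α} (p : G.Walk u w) (hu : P u) : P w := by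
  induction p with
  | nil => exact hu
  | cons h p ih => exact ih (hP _ _ hu h)

lemma ncard_setOf_eq {α : Type*} [Fintype α] (p : α → Prop) [DecidablePred p] :
    {a | p a}.ncard = (Finset.univ.filter p).card := by
  rw [show {a | p a} = ↑(Finset.univ.filter p) by ext a; simp, Set.ncard_coe_finset]

/-- **Lemma 2.1.** A tree (in the hypergraph sense: a connected `n1`-uniform hypergraph
with `(n1-1)|E|+1` vertices) with at least `2` edges has at least `μ(G) + 2` leaves,
where a leaf is an edge with exactly `n1 - 1` vertices of degree `1`. -/
theorem hypergraph_tree_leafCount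
    (n1 : ℕ) (hn1 : 2 ≤ n1) (V E : Type) [Finite V] [Finite E]
    (I : V → E → Prop)
    (hE : Nonempty E)
    (hconn : (incidenceGraph I).Connected)
    (hunif : ∀ e, {v | I v e}.ncard = n1)
    (htree : Nat.card V = (n1 - 1) * Nat.card E + 1)
    (hE2 : 2 ≤ Nat.card E) :
    hypMu I + 2 ≤ {e | {v | I v e ∧ hypDegree I v = 1}.ncard = n1 - 1}.ncard := by
  classical
  have _i1 : Fintype V := Fintype.ofFinite V
  have _i2 : Fintype E := Fintype.ofFinite E
  set D : V → ℕ := fun v => (Finset.univ.filter (fun e => I v e)).card with hDdef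
  have hD : ∀ v, hypDegree I v = D v := fun v => ncard_setOf_eq _
  have hsize : ∀ e, (Finset.univ.filter (fun v => I v e)).card = n1 := by
    intro e; rw [← ncard_setOf_eq]; exact hunif e
  -- degree ≥ 1 for every vertex
  have hdeg1 : ∀ v, 1 ≤ D v := by
    intro v
    obtain ⟨e0⟩ := hE
    obtain ⟨w⟩ := hconn (Sum.inl v) (Sum.inr e0)
    have hne0 : (Sum.inl v : V ⊕ E) ≠ Sum.inr e0 := by simp
    obtain ⟨b, h⟩ : ∃ b, (incidenceGraph I).Adj (Sum.inl v) b :=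
      ⟨_, SimpleGraph.Walk.adj_snd (p := w) (SimpleGraph.Walk.not_nil_of_ne hne0)⟩
    rw [incidenceGraph, SimpleGraph.fromRel_adj] at h
    obtain ⟨-, h | h⟩ := h
    · obtain ⟨v', e, hv, hb, hI⟩ := h
      injection hv with h'
      rw [← h'] at hI
      have : e ∈ Finset.univ.filter (fun e => I v e) := by simp [hI]
      exact Finset.card_pos.mpr ⟨e, this⟩
    · obtain ⟨v', e, hv, hb, hI⟩ := h
      exact absurd hb (by simp)
  -- every edge contains a vertex of degree ≥ 2
  have hedge1 : ∀ e, ∃ v, I v e ∧ 2 ≤ D v := by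
    intro e
    by_contra hcon
    push_neg at hcon
    have hone : ∀ v, I v e → D v = 1 := fun v hv => by
      have := hcon v hv; have := hdeg1 v; omega
    have h2 : 1 < Fintype.card E := by rwa [← Nat.card_eq_fintype_card]
    obtain ⟨e', he'⟩ := Fintype.exists_ne_of_one_lt_card h2 e
    obtain ⟨w⟩ := hconn (Sum.inr e) (Sum.inr e')
    have key := walk_closed (G := incidenceGraph I)
      (fun x => x = Sum.inr e ∨ ∃ v, x = Sum.inl v ∧ I v e) ?_ w (Or.inl rfl)
    · rcases key with h | ⟨v, h, -⟩
      · exact he' (by injection h)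
      · exact absurd h (by simp)
    · rintro a b ha hab
      rw [incidenceGraph, SimpleGraph.fromRel_adj] at hab
      obtain ⟨hne, hr | hr⟩ := hab
      · obtain ⟨v, e1, rfl, rfl, hI⟩ := hr
        rcases ha with ha | ⟨v', hv', hI'⟩
        · exact absurd ha (by simp)
        · injection hv' with h'
          rw [← h'] at hI'
          -- deg v = 1 and I v e, I v e1 ⇒ e1 = e
          have hd : D v = 1 := hone v hI'
          have hle : (Finset.univ.filter (fun e => I v e)).card ≤ 1 := le_of_eq hd
          have := Finset.card_le_one.mp hle e1 (by simp [hI]) e (by simp [hI'])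
          left; rw [this]
      · obtain ⟨v, e1, rfl, rfl, hI⟩ := hr
        rcases ha with ha | ⟨v', hv', hI'⟩
        · obtain rfl : e1 = e := by injection ha
          right; exact ⟨v, rfl, hI⟩
        · exact absurd hv' (by simp)
  -- split of each edge into degree-1 and degree-≥2 vertices
  have hsplit : ∀ e, (Finset.univ.filter (fun v => I v e ∧ D v = 1)).card
      + (Finset.univ.filter (fun v => I v e ∧ 2 ≤ D v)).card = n1 := by
    intro e
    rw [← hsize e, ← Finset.card_union_of_disjoint]
    · congr 1
      ext v
      have h12 : D v = 1 ∨ 2 ≤ D v := by have := hdeg1 v; omega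
      simp only [Finset.mem_union, Finset.mem_filter, Finset.mem_univ, true_and]
      tauto
    · rw [Finset.disjoint_left]
      rintro v hv hv'
      simp only [Finset.mem_filter] at hv hv'
      omega
  -- leaf finset
  set Lf : Finset E := Finset.univ.filter
    (fun e => (Finset.univ.filter (fun v => I v e ∧ D v = 1)).card = n1 - 1) with hLf
  -- each edge's count of deg ≥2 vertices: ≥ 1, and ≥ 2 if not a leaf
  have hce1 : ∀ e, 1 ≤ (Finset.univ.filter (fun v => I v e ∧ 2 ≤ D v)).card := by
    intro e
    obtain ⟨v, hI, hv⟩ := hedge1 e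
    exact Finset.card_pos.mpr ⟨v, by simp [hI, hv]⟩
  have hce2 : ∀ e, e ∉ Lf → 2 ≤ (Finset.univ.filter (fun v => I v e ∧ 2 ≤ D v)).card := by
    intro e he
    have hne : (Finset.univ.filter (fun v => I v e ∧ D v = 1)).card ≠ n1 - 1 := by
      intro h; exact he (by simp [hLf, h])
    have := hsplit e
    have := hce1 e
    omega
  -- double counting: sum over edges of deg-≥2 counts = sum of degrees over S
  set S : Finset V := Finset.univ.filter (fun v => 2 ≤ D v) with hS
  have hdc : ∑ e, (Finset.univ.filter (fun v => I v e ∧ 2 ≤ D v)).card = ∑ v ∈ S, D v := by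
    rw [Finset.sum_filter]
    simp_rw [Finset.card_filter]
    rw [Finset.sum_comm]
    refine Finset.sum_congr rfl fun v _ => ?_
    by_cases hv : 2 ≤ D v
    · simp only [hv, and_true, if_true]
      exact (Finset.card_filter _ _).symm
    · simp [hv]
  -- lower bound on the double count
  have hlb : 2 * Fintype.card E ≤ (∑ v ∈ S, D v) + Lf.card := by
    have h1 : ∀ e : E, 2 ≤ (Finset.univ.filter (fun v => I v e ∧ 2 ≤ D v)).card
        + (if e ∈ Lf then 1 else 0) := by
      intro e
      by_cases he : e ∈ Lf
      · have := hce1 e; rw [if_pos he]; omega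
      · have := hce2 e he; rw [if_neg he]; omega
    calc 2 * Fintype.card E = ∑ _e : E, 2 := by
          rw [Finset.sum_const, Finset.card_univ]; ring
      _ ≤ ∑ e, ((Finset.univ.filter (fun v => I v e ∧ 2 ≤ D v)).card
            + (if e ∈ Lf then 1 else 0)) := Finset.sum_le_sum fun e _ => h1 e
      _ = (∑ v ∈ S, D v) + Lf.card := by
          rw [Finset.sum_add_distrib, hdc]
          congr 1
          simp [Finset.sum_ite_mem]
  -- total degree sum
  have htot : ∑ v, D v = n1 * Fintype.card E := by
    simp_rw [hDdef, Finset.card_filter]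
    rw [Finset.sum_comm]
    have : ∀ e : E, (∑ v, if I v e then 1 else 0) = n1 := by
      intro e; rw [← Finset.card_filter]; exact hsize e
    rw [Finset.sum_congr rfl fun e _ => this e, Finset.sum_const, Finset.card_univ]
    ring
  -- sum of (D v - 1) over univ equals sum over S
  have hres : ∀ f : ℕ → ℕ, f 1 = 0 → (∑ v, f (D v)) = ∑ v ∈ S, f (D v) := by
    intro f hf
    rw [← Finset.sum_filter_add_sum_filter_not Finset.univ (fun v => 2 ≤ D v) (fun v => f (D v))]
    have : ∑ v ∈ Finset.univ.filter (fun v => ¬ 2 ≤ D v), f (D v) = 0 := by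
      refine Finset.sum_eq_zero fun v hv => ?_
      simp only [Finset.mem_filter] at hv
      have := hdeg1 v
      have : D v = 1 := by omega
      rw [this, hf]
    rw [this, add_zero]
  have hsub1 : (∑ v, (D v - 1)) = ∑ v ∈ S, (D v - 1) := hres (· - 1) rfl
  have hsub2 : (∑ v, (D v - 2)) = ∑ v ∈ S, (D v - 2) := hres (· - 2) rfl
  -- relate the three sums over S
  have hs1 : ∑ v ∈ S, (D v - 1) = (∑ v ∈ S, (D v - 2)) + S.card := by
    have h : ∀ v ∈ S, D v - 1 = (D v - 2) + 1 := fun v hv => by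
      simp only [hS, Finset.mem_filter] at hv; omega
    rw [Finset.sum_congr rfl h, Finset.sum_add_distrib, Finset.sum_const, smul_eq_mul, mul_one]
  have hs2 : ∑ v ∈ S, D v = (∑ v ∈ S, (D v - 2)) + 2 * S.card := by
    have h : ∀ v ∈ S, D v = (D v - 2) + 2 := fun v hv => by
      simp only [hS, Finset.mem_filter] at hv; omega
    rw [Finset.sum_congr rfl h, Finset.sum_add_distrib, Finset.sum_const, smul_eq_mul,
      Nat.mul_comm]
  have htot' : ∑ v, D v = (∑ v, (D v - 1)) + Fintype.card V := by
    have h : ∀ v ∈ Finset.univ, D v = (D v - 1) + 1 := fun v _ => by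
      have := hdeg1 v; omega
    rw [Finset.sum_congr rfl h, Finset.sum_add_distrib, Finset.sum_const, smul_eq_mul,
      mul_one, Finset.card_univ]
  have hcardV : Fintype.card V = (n1 - 1) * Fintype.card E + 1 := by
    rw [← Nat.card_eq_fintype_card, ← Nat.card_eq_fintype_card]
    exact htree
  have haux : (n1 - 1) * Fintype.card E + Fintype.card E = n1 * Fintype.card E := by
    have h : n1 - 1 + 1 = n1 := by omega
    calc (n1 - 1) * Fintype.card E + Fintype.card E
        = (n1 - 1 + 1) * Fintype.card E := by ring
      _ = n1 * Fintype.card E := by rw [h]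
  -- final goal conversions
  have hgoal : {e | {v | I v e ∧ hypDegree I v = 1}.ncard = n1 - 1}.ncard = Lf.card := by
    simp_rw [hD, ncard_setOf_eq]
    rfl
  have hmu : hypMu I = ∑ v ∈ S, (D v - 2) := by
    rw [hypMu, finsum_eq_sum_of_fintype, ← hsub2]
    exact Finset.sum_congr rfl fun v _ => by rw [hD]
  rw [hgoal, hmu]
  -- now pure arithmetic
  have key : n1 * Fintype.card E
      = ((∑ v ∈ S, (D v - 2)) + S.card) + ((n1 - 1) * Fintype.card E + 1) := by
    rw [← htot, htot', hsub1, hs1, hcardV]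
  have hlb' : 2 * Fintype.card E ≤ ((∑ v ∈ S, (D v - 2)) + 2 * S.card) + Lf.card := by
    rw [← hs2]; exact hlb
  omega
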